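/- A payment-free Shapley operator F has a fixed point not proportional to the all-ones vector 𝟏 if and only if there exists a set I ∈ 𝓕⁻ with I ≠ ∅, I ≠ S, and I = Φ*(Φ(I)). -/
import Mathlib


/-- The payment-free Shapley operator associated with transition probabilities `P`. -/
noncomputable def paymentFreeShapley {n : ℕ} {A : Fin n → Type*} {B : ∀ i, A i → Type*}
    [∀ i, Fintype (A i)] [∀ i, Nonempty (A i)]
    [∀ i a, Fintype (B i a)] [∀ i a, Nonempty (B i a)]
    (P : ∀ i (a : A i), B i a → Fin n → ℝ) :
    (Fin n → ℝ) → (Fin n → ℝ) :=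
  fun x i => ⨅ a : A i, ⨆ b : B i a, ∑ j, P i a b j * x j

/-- The indicator vector `𝟏_K` of a set of states `K`. -/
noncomputable def indic {n : ℕ} (K : Set (Fin n)) : Fin n → ℝ :=
  K.indicator fun _ => (1 : ℝ)

/-- The family `𝓕⁻ = { I ⊆ S : F(𝟏_{S∖I}) ≤ 𝟏_{S∖I} }`. -/
def Fminus {n : ℕ} (F : (Fin n → ℝ) → (Fin n → ℝ)) : Set (Set (Fin n)) :=
  {I | F (indic Iᶜ) ≤ indic Iᶜ}

/-- The family `𝓕⁺ = { J ⊆ S : 𝟏_J ≤ F(𝟏_J) }`. -/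
def Fplus {n : ℕ} (F : (Fin n → ℝ) → (Fin n → ℝ)) : Set (Set (Fin n)) :=
  {J | indic J ≤ F (indic J)}

/-- `Φ(I)`, the union of all `J ∈ 𝓕⁺` disjoint from `I`. -/
def Phi {n : ℕ} (F : (Fin n → ℝ) → (Fin n → ℝ)) (I : Set (Fin n)) : Set (Fin n) :=
  ⋃₀ {J | J ∈ Fplus F ∧ I ∩ J = ∅}

/-- `Φ*(J)`, the union of all `I ∈ 𝓕⁻` disjoint from `J`. -/
def PhiStar {n : ℕ} (F : (Fin n → ℝ) → (Fin n → ℝ)) (J : Set (Fin n)) : Set (Fin n) :=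
  ⋃₀ {I | I ∈ Fminus F ∧ I ∩ J = ∅}

open Set

section IndicLemmas
variable {n : ℕ}

lemma indic_of_mem {K : Set (Fin n)} {i : Fin n} (h : i ∈ K) : indic K i = 1 :=
  Set.indicator_of_mem h _

lemma indic_of_notMem {K : Set (Fin n)} {i : Fin n} (h : i ∉ K) : indic K i = 0 :=
  Set.indicator_of_notMem h _

lemma indic_nonneg (K : Set (Fin n)) : (0 : Fin n → ℝ) ≤ indic K := fun i => by
  by_cases h : i ∈ K
  · simp [indic_of_mem h]
  · simp [indic_of_notMem h]

lemma indic_le_one (K : Set (Fin n)) : indic K ≤ 1 := fun i => by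
  by_cases h : i ∈ K
  · simp [indic_of_mem h]
  · simp [indic_of_notMem h]

lemma indic_mono {K L : Set (Fin n)} (h : K ⊆ L) : indic K ≤ indic L := fun i => by
  by_cases hi : i ∈ K
  · rw [indic_of_mem hi, indic_of_mem (h hi)]
  · rw [indic_of_notMem hi]; exact indic_nonneg L i

lemma indic_empty : indic (∅ : Set (Fin n)) = 0 := by
  funext i; exact indic_of_notMem (notMem_empty i)

lemma indic_univ : indic (univ : Set (Fin n)) = 1 := by
  funext i; exact indic_of_mem (mem_univ i)

end IndicLemmas

section PFS
variable {n : ℕ} {A : Fin n → Type*} {B : ∀ i, A i → Type*}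
  [∀ i, Fintype (A i)] [∀ i, Nonempty (A i)]
  [∀ i a, Fintype (B i a)] [∀ i a, Nonempty (B i a)]
  {P : ∀ i (a : A i), B i a → Fin n → ℝ}

lemma pfs_mono (hP0 : ∀ i a b j, 0 ≤ P i a b j) : Monotone (paymentFreeShapley P) := by
  intro x y hxy i
  refine ciInf_mono (Set.Finite.bddBelow (Set.finite_range _)) fun a => ?_
  refine ciSup_mono (Set.Finite.bddAbove (Set.finite_range _)) fun b => ?_
  exact Finset.sum_le_sum fun j _ => mul_le_mul_of_nonneg_left (hxy j) (hP0 i a b j)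

lemma pfs_const (hP1 : ∀ i a b, ∑ j, P i a b j = 1) (c : ℝ) :
    paymentFreeShapley P (fun _ => c) = fun _ => c := by
  funext i
  have h : ∀ (a : A i) (b : B i a), ∑ j, P i a b j * c = c := fun a b => by
    rw [← Finset.sum_mul, hP1 i a b, one_mul]
  show (⨅ a : A i, ⨆ b : B i a, ∑ j, P i a b j * c) = c
  simp only [h, ciSup_const, ciInf_const]

lemma pfs_zero (hP1 : ∀ i a b, ∑ j, P i a b j = 1) :
    paymentFreeShapley P 0 = 0 := pfs_const hP1 0

lemma pfs_one (hP1 : ∀ i a b, ∑ j, P i a b j = 1) :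
    paymentFreeShapley P 1 = 1 := pfs_const hP1 1

lemma pfs_attain_min (x : Fin n → ℝ) (i : Fin n) :
    ∃ a : A i, ∀ b : B i a, ∑ j, P i a b j * x j ≤ paymentFreeShapley P x i := by
  obtain ⟨a, ha⟩ := Finite.exists_min (fun a : A i => ⨆ b : B i a, ∑ j, P i a b j * x j)
  refine ⟨a, fun b => ?_⟩
  calc ∑ j, P i a b j * x j ≤ ⨆ b : B i a, ∑ j, P i a b j * x j :=
        le_ciSup (f := fun b : B i a => ∑ j, P i a b j * x j) (Set.Finite.bddAbove (Set.finite_range _)) b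
    _ ≤ paymentFreeShapley P x i := le_ciInf ha

lemma pfs_attain_max (x : Fin n → ℝ) (i : Fin n) (a : A i) :
    ∃ b : B i a, paymentFreeShapley P x i ≤ ∑ j, P i a b j * x j := by
  obtain ⟨b, hb⟩ := Finite.exists_max (fun b : B i a => ∑ j, P i a b j * x j)
  exact ⟨b, (ciInf_le (Set.Finite.bddBelow (Set.finite_range _)) a).trans (ciSup_le hb)⟩

lemma pfs_le_of (x : Fin n → ℝ) (i : Fin n) (a : A i) {c : ℝ}
    (h : ∀ b : B i a, ∑ j, P i a b j * x j ≤ c) :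
    paymentFreeShapley P x i ≤ c :=
  (ciInf_le (Set.Finite.bddBelow (Set.finite_range _)) a).trans (ciSup_le h)

lemma le_pfs_of (x : Fin n → ℝ) (i : Fin n) {c : ℝ}
    (h : ∀ a : A i, ∃ b : B i a, c ≤ ∑ j, P i a b j * x j) :
    c ≤ paymentFreeShapley P x i :=
  le_ciInf fun a => (h a).elim fun b hb =>
    hb.trans (le_ciSup (f := fun b : B i a => ∑ j, P i a b j * x j) (Set.Finite.bddAbove (Set.finite_range _)) b)

end PFS

section Galois
variable {n : ℕ} {F : (Fin n → ℝ) → (Fin n → ℝ)}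

lemma sUnion_mem_Fminus (hm : Monotone F) (h1 : F 1 = 1)
    (𝒮 : Set (Set (Fin n))) (h : 𝒮 ⊆ Fminus F) : ⋃₀ 𝒮 ∈ Fminus F := by
  show F (indic (⋃₀ 𝒮)ᶜ) ≤ indic (⋃₀ 𝒮)ᶜ
  intro i
  by_cases hi : i ∈ ⋃₀ 𝒮
  · obtain ⟨I, hI, hiI⟩ := hi
    have h2 : F (indic (⋃₀ 𝒮)ᶜ) i ≤ F (indic Iᶜ) i :=
      hm (indic_mono (compl_subset_compl.2 (subset_sUnion_of_mem hI))) i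
    have h3 : F (indic Iᶜ) i ≤ indic Iᶜ i := h hI i
    rw [indic_of_notMem (show i ∉ Iᶜ from fun hc => hc hiI)] at h3
    rw [indic_of_notMem (show i ∉ (⋃₀ 𝒮)ᶜ from fun hc => hc ⟨I, hI, hiI⟩)]
    exact h2.trans h3
  · rw [indic_of_mem (show i ∈ (⋃₀ 𝒮)ᶜ from hi)]
    calc F (indic (⋃₀ 𝒮)ᶜ) i ≤ F 1 i := hm (indic_le_one _) i
      _ = 1 := by rw [h1]; rfl

lemma sUnion_mem_Fplus (hm : Monotone F) (h0 : F 0 = 0)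
    (𝒮 : Set (Set (Fin n))) (h : 𝒮 ⊆ Fplus F) : ⋃₀ 𝒮 ∈ Fplus F := by
  show indic (⋃₀ 𝒮) ≤ F (indic (⋃₀ 𝒮))
  intro i
  by_cases hi : i ∈ ⋃₀ 𝒮
  · obtain ⟨J, hJ, hiJ⟩ := hi
    have h2 : F (indic J) i ≤ F (indic (⋃₀ 𝒮)) i :=
      hm (indic_mono (subset_sUnion_of_mem hJ)) i
    have h3 : indic J i ≤ F (indic J) i := h hJ i
    rw [indic_of_mem hiJ] at h3
    rw [indic_of_mem (show i ∈ ⋃₀ 𝒮 from ⟨J, hJ, hiJ⟩)]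
    exact h3.trans h2
  · rw [indic_of_notMem hi]
    calc (0:ℝ) = F 0 i := by rw [h0]; rfl
      _ ≤ F (indic (⋃₀ 𝒮)) i := hm (indic_nonneg _) i

lemma Phi_mem_Fplus (hm : Monotone F) (h0 : F 0 = 0) (I : Set (Fin n)) :
    Phi F I ∈ Fplus F :=
  sUnion_mem_Fplus hm h0 _ (fun _ hJ => hJ.1)

lemma PhiStar_mem_Fminus (hm : Monotone F) (h1 : F 1 = 1) (J : Set (Fin n)) :
    PhiStar F J ∈ Fminus F :=
  sUnion_mem_Fminus hm h1 _ (fun _ hI => hI.1)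

lemma Phi_inter (I : Set (Fin n)) : I ∩ Phi F I = ∅ := by
  ext x
  simp only [mem_inter_iff, mem_empty_iff_false, iff_false, not_and]
  rintro hxI ⟨J, ⟨_, hdis⟩, hxJ⟩
  exact absurd (show x ∈ I ∩ J from ⟨hxI, hxJ⟩) (by rw [hdis]; exact notMem_empty x)

lemma PhiStar_inter (J : Set (Fin n)) : PhiStar F J ∩ J = ∅ := by
  ext x
  simp only [mem_inter_iff, mem_empty_iff_false, iff_false, not_and]
  rintro ⟨I, ⟨_, hdis⟩, hxI⟩ hxJ
  exact absurd (show x ∈ I ∩ J from ⟨hxI, hxJ⟩) (by rw [hdis]; exact notMem_empty x)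

lemma subset_PhiStar_Phi {I : Set (Fin n)} (hI : I ∈ Fminus F) :
    I ⊆ PhiStar F (Phi F I) :=
  subset_sUnion_of_mem ⟨hI, Phi_inter I⟩

lemma Phi_PhiStar_Phi {I : Set (Fin n)} (hm : Monotone F) (h0 : F 0 = 0)
    (hI : I ∈ Fminus F) : Phi F (PhiStar F (Phi F I)) = Phi F I := by
  apply subset_antisymm
  · apply sUnion_subset
    rintro J ⟨hJ, hdis⟩
    refine subset_sUnion_of_mem ⟨hJ, ?_⟩
    rw [eq_empty_iff_forall_notMem]
    rintro x ⟨hxI, hxJ⟩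
    have : x ∈ PhiStar F (Phi F I) ∩ J := ⟨subset_PhiStar_Phi hI hxI, hxJ⟩
    rw [hdis] at this
    exact this
  · refine subset_sUnion_of_mem ⟨Phi_mem_Fplus hm h0 I, ?_⟩
    exact PhiStar_inter (Phi F I)

end Galois

/-- a payment-free Shapley operator has a fixed point not proportional to
the all-ones vector if and only if there is a nontrivial subset `I ∈ 𝓕⁻` closed for the
Galois connection `(Φ, Φ*)`. -/
theorem nontrivial_fixedPoint_iff_exists_closed_nontrivial
    {n : ℕ} {A : Fin n → Type*} {B : ∀ i, A i → Type*}
    [∀ i, Fintype (A i)] [∀ i, Nonempty (A i)]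
    [∀ i a, Fintype (B i a)] [∀ i a, Nonempty (B i a)]
    (P : ∀ i (a : A i), B i a → Fin n → ℝ)
    (hP0 : ∀ i a b j, 0 ≤ P i a b j)
    (hP1 : ∀ i a b, ∑ j, P i a b j = 1) :
    (∃ u : Fin n → ℝ, paymentFreeShapley P u = u ∧
        ¬ ∃ c : ℝ, u = c • (1 : Fin n → ℝ)) ↔
    (∃ I : Set (Fin n), I ∈ Fminus (paymentFreeShapley P) ∧ I ≠ ∅ ∧ I ≠ Set.univ ∧
        I = PhiStar (paymentFreeShapley P) (Phi (paymentFreeShapley P) I)) := by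
  have hm : Monotone (paymentFreeShapley P) := pfs_mono hP0
  have h0 : paymentFreeShapley P 0 = 0 := pfs_zero hP1
  have h1 : paymentFreeShapley P 1 = 1 := pfs_one hP1
  constructor
  · rintro ⟨u, hu, hnc⟩
    have hne : Nonempty (Fin n) := by
      by_contra h
      exact hnc ⟨0, funext fun i => (h ⟨i⟩).elim⟩
    obtain ⟨i₀, hi₀⟩ := Finite.exists_min u
    obtain ⟨j₀, hj₀⟩ := Finite.exists_max u
    have hlt : u i₀ < u j₀ := by
      rcases lt_or_ge (u i₀) (u j₀) with h | h
      · exact h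
      · exfalso
        apply hnc
        refine ⟨u i₀, funext fun j => ?_⟩
        have hj : u j = u i₀ := le_antisymm ((hj₀ j).trans h) (hi₀ j)
        simp [hj]
    set I₀ : Set (Fin n) := {i | ∀ j, u i ≤ u j} with hI₀def
    set J₀ : Set (Fin n) := {i | ∀ j, u j ≤ u i} with hJ₀def
    have hi₀mem : i₀ ∈ I₀ := hi₀
    have hj₀mem : j₀ ∈ J₀ := hj₀
    have hdisj : I₀ ∩ J₀ = ∅ := by
      rw [Set.eq_empty_iff_forall_notMem]
      rintro x ⟨hx1, hx2⟩
      have hx1' : ∀ j, u x ≤ u j := hx1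
      have hx2' : ∀ j, u j ≤ u x := hx2
      exact absurd hlt (not_lt.2 ((hx2' j₀).trans (hx1' i₀)))
    have hI₀ : I₀ ∈ Fminus (paymentFreeShapley P) := by
      show paymentFreeShapley P (indic I₀ᶜ) ≤ indic I₀ᶜ
      intro i
      by_cases hi : i ∈ I₀
      · have hi' : ∀ j, u i ≤ u j := hi
        rw [indic_of_notMem (show i ∉ I₀ᶜ from fun hc => hc hi)]
        obtain ⟨a, ha⟩ := pfs_attain_min (P := P) u i
        simp only [hu] at ha
        refine pfs_le_of (indic I₀ᶜ) i a fun b => ?_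
        have hsum : ∑ j, P i a b j * u j = u i := by
          refine le_antisymm (ha b) ?_
          calc u i = ∑ j, P i a b j * u i := by rw [← Finset.sum_mul, hP1, one_mul]
            _ ≤ ∑ j, P i a b j * u j :=
              Finset.sum_le_sum fun j _ => mul_le_mul_of_nonneg_left (hi' j) (hP0 i a b j)
        have hci : ∑ j, P i a b j * u i = u i := by rw [← Finset.sum_mul, hP1, one_mul]
        have hzero : ∑ j, P i a b j * (u j - u i) = 0 := by
          simp only [mul_sub, Finset.sum_sub_distrib, hsum, hci, sub_self]
        have hterm := (Finset.sum_eq_zero_iff_of_nonneg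
          (fun j _ => mul_nonneg (hP0 i a b j) (sub_nonneg.2 (hi' j)))).1 hzero
        refine le_of_eq (Finset.sum_eq_zero fun j _ => ?_)
        by_cases hj : j ∈ I₀
        · rw [indic_of_notMem (show j ∉ I₀ᶜ from fun hc => hc hj), mul_zero]
        · have hPj : P i a b j = 0 := by
            rcases mul_eq_zero.1 (hterm j (Finset.mem_univ j)) with h | h
            · exact h
            · exfalso
              apply hj
              intro k
              have huj : u j = u i := by
                have := sub_eq_zero.1 h
                linarith
              rw [huj]
              exact hi' k
          rw [hPj, zero_mul]
      · rw [indic_of_mem (show i ∈ I₀ᶜ from hi)]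
        calc paymentFreeShapley P (indic I₀ᶜ) i ≤ paymentFreeShapley P 1 i :=
              hm (indic_le_one _) i
          _ = 1 := by rw [h1]; rfl
    have hJ₀ : J₀ ∈ Fplus (paymentFreeShapley P) := by
      show indic J₀ ≤ paymentFreeShapley P (indic J₀)
      intro i
      by_cases hi : i ∈ J₀
      · have hi' : ∀ j, u j ≤ u i := hi
        rw [indic_of_mem hi]
        refine le_pfs_of (indic J₀) i fun a => ?_
        obtain ⟨b, hb⟩ := pfs_attain_max (P := P) u i a
        rw [hu] at hb
        refine ⟨b, ?_⟩
        have hci : ∑ j, P i a b j * u i = u i := by rw [← Finset.sum_mul, hP1, one_mul]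
        have hsum : ∑ j, P i a b j * u j = u i := by
          refine le_antisymm ?_ hb
          calc ∑ j, P i a b j * u j ≤ ∑ j, P i a b j * u i :=
              Finset.sum_le_sum fun j _ => mul_le_mul_of_nonneg_left (hi' j) (hP0 i a b j)
            _ = u i := hci
        have hzero : ∑ j, P i a b j * (u i - u j) = 0 := by
          simp only [mul_sub, Finset.sum_sub_distrib, hsum, hci, sub_self]
        have hterm := (Finset.sum_eq_zero_iff_of_nonneg
          (fun j _ => mul_nonneg (hP0 i a b j) (sub_nonneg.2 (hi' j)))).1 hzero
        have hone : ∑ j, P i a b j * indic J₀ j = 1 := by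
          rw [← hP1 i a b]
          refine Finset.sum_congr rfl fun j _ => ?_
          by_cases hj : j ∈ J₀
          · rw [indic_of_mem hj, mul_one]
          · have hPj : P i a b j = 0 := by
              rcases mul_eq_zero.1 (hterm j (Finset.mem_univ j)) with h | h
              · exact h
              · exfalso
                apply hj
                intro k
                have huj : u j = u i := by
                  have := sub_eq_zero.1 h
                  linarith
                rw [huj]
                exact hi' k
            rw [hPj, zero_mul]
        rw [hone]
      · rw [indic_of_notMem hi]
        calc (0:ℝ) = paymentFreeShapley P 0 i := by rw [h0]; rfl
          _ ≤ paymentFreeShapley P (indic J₀) i := hm (indic_nonneg _) i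
    refine ⟨PhiStar (paymentFreeShapley P) (Phi (paymentFreeShapley P) I₀),
      ?_, ?_, ?_, ?_⟩
    · exact PhiStar_mem_Fminus hm h1 _
    · intro hcontra
      have hmem := subset_PhiStar_Phi hI₀ hi₀mem
      rw [hcontra] at hmem
      exact hmem
    · intro hcontra
      have hmemJ : J₀ ∈ {J | J ∈ Fplus (paymentFreeShapley P) ∧ I₀ ∩ J = ∅} :=
        ⟨hJ₀, hdisj⟩
      have hj₀Phi : j₀ ∈ Phi (paymentFreeShapley P) I₀ :=
        Set.subset_sUnion_of_mem hmemJ hj₀mem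
      have hmem : j₀ ∈ PhiStar (paymentFreeShapley P) (Phi (paymentFreeShapley P) I₀) ∩
          Phi (paymentFreeShapley P) I₀ := ⟨by rw [hcontra]; trivial, hj₀Phi⟩
      rw [PhiStar_inter] at hmem
      exact hmem
    · rw [Phi_PhiStar_Phi hm h0 hI₀]
  · rintro ⟨I, hI, hIne, hIuniv, hIclosed⟩
    have hI' : paymentFreeShapley P (indic Iᶜ) ≤ indic Iᶜ := hI
    have hJplus : Phi (paymentFreeShapley P) I ∈ Fplus (paymentFreeShapley P) :=
      Phi_mem_Fplus hm h0 I
    have hJplus' : indic (Phi (paymentFreeShapley P) I) ≤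
        paymentFreeShapley P (indic (Phi (paymentFreeShapley P) I)) := hJplus
    have hIJ : I ∩ Phi (paymentFreeShapley P) I = ∅ := Phi_inter I
    have hJne : Phi (paymentFreeShapley P) I ≠ ∅ := by
      intro hJe
      apply hIuniv
      have huniv : (Set.univ : Set (Fin n)) ∈ Fminus (paymentFreeShapley P) := by
        show paymentFreeShapley P (indic (Set.univ : Set (Fin n))ᶜ) ≤
          indic (Set.univ : Set (Fin n))ᶜ
        rw [Set.compl_univ, indic_empty, h0]
      have hsub : (Set.univ : Set (Fin n)) ⊆
          PhiStar (paymentFreeShapley P) (Phi (paymentFreeShapley P) I) :=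
        Set.subset_sUnion_of_mem ⟨huniv, by rw [hJe, Set.inter_empty]⟩
      rw [← hIclosed] at hsub
      exact Set.eq_univ_of_univ_subset hsub
    have hJIc : Phi (paymentFreeShapley P) I ⊆ Iᶜ := fun x hx hxI =>
      absurd (show x ∈ I ∩ Phi (paymentFreeShapley P) I from ⟨hxI, hx⟩)
        (by rw [hIJ]; exact Set.notMem_empty x)
    set T : Set (Fin n → ℝ) :=
      {x | indic (Phi (paymentFreeShapley P) I) ≤ x ∧ x ≤ indic Iᶜ ∧
        x ≤ paymentFreeShapley P x} with hT
    have hJT : indic (Phi (paymentFreeShapley P) I) ∈ T :=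
      ⟨le_refl _, indic_mono hJIc, hJplus'⟩
    set u : Fin n → ℝ := fun i => sSup ((fun x : Fin n → ℝ => x i) '' T) with hudef
    have hbdd : ∀ i, BddAbove ((fun x : Fin n → ℝ => x i) '' T) := fun i =>
      ⟨1, by rintro y ⟨x, hx, rfl⟩; exact (hx.2.1 i).trans (indic_le_one _ i)⟩
    have hneT : ∀ i, ((fun x : Fin n → ℝ => x i) '' T).Nonempty := fun i =>
      ⟨_, ⟨_, hJT, rfl⟩⟩
    have hxu : ∀ x ∈ T, x ≤ u := fun x hx i => le_csSup (hbdd i) ⟨x, hx, rfl⟩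
    have hule : ∀ y : Fin n → ℝ, (∀ x ∈ T, x ≤ y) → u ≤ y := fun y hy i =>
      csSup_le (hneT i) (by rintro z ⟨x, hx, rfl⟩; exact hy x hx i)
    have hJu : indic (Phi (paymentFreeShapley P) I) ≤ u := hxu _ hJT
    have huIc : u ≤ indic Iᶜ := hule _ fun x hx => hx.2.1
    have huF : u ≤ paymentFreeShapley P u := hule _ fun x hx =>
      hx.2.2.trans (hm (hxu x hx))
    have hFuT : paymentFreeShapley P u ∈ T :=
      ⟨hJu.trans huF, (hm huIc).trans hI', hm huF⟩
    have hFu : paymentFreeShapley P u = u := le_antisymm (hxu _ hFuT) huF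
    obtain ⟨i, hiI⟩ := Set.nonempty_iff_ne_empty.2 hIne
    obtain ⟨j, hjJ⟩ := Set.nonempty_iff_ne_empty.2 hJne
    refine ⟨u, hFu, ?_⟩
    rintro ⟨c, hc⟩
    have hui : u i = 0 := by
      refine le_antisymm ?_ ?_
      · have h := huIc i
        rwa [indic_of_notMem (show i ∉ Iᶜ from fun hc' => hc' hiI)] at h
      · have h := hJu i
        rwa [indic_of_notMem (show i ∉ Phi (paymentFreeShapley P) I from fun hc' =>
          absurd (show i ∈ I ∩ Phi (paymentFreeShapley P) I from ⟨hiI, hc'⟩)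
            (by rw [hIJ]; exact Set.notMem_empty i))] at h
    have huj : (1:ℝ) ≤ u j := by
      have h := hJu j
      rwa [indic_of_mem hjJ] at h
    rw [hc] at hui huj
    simp only [Pi.smul_apply, Pi.one_apply, smul_eq_mul, mul_one] at hui huj
    linarith
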